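/- If ⟨F,A,C⟩ is a constrained formula of order n and ⟨F,A,C⟩ derives into ⟨G,A,C⟩ by one application of any of the inference rules Remove-insat1, Remove-insat2, Remove-sat1, Remove-sat2, Decompose, Decrease-height, or Remove-height, then ⟨G,A,C⟩ is a constrained formula of order n and Sol(⟨G,A,C⟩) = Sol(⟨F,A,C⟩). -/

import Mathlib

namespace RITRC

/-- Terms over a signature (symbols `F` with arities `ar`) with variables in `V`. -/
inductive Term (F : Type) (ar : F → ℕ) (V : Type) : Type where
  | var : V → Term F ar V
  | app : (f : F) → (Fin (ar f) → Term F ar V) → Term F ar V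

/-- Ground terms (terms without variables). -/
abbrev GTerm (F : Type) (ar : F → ℕ) : Type := Term F ar Empty

variable {F V V' Q : Type} {ar : F → ℕ}

/-- Applying a substitution to a term. -/
def Term.subst (φ : V → Term F ar V') : Term F ar V → Term F ar V'
  | .var x => φ x
  | .app f ts => .app f (fun i => (ts i).subst φ)

/-- The height of a term. -/
def Term.height : Term F ar V → ℕ
  | .var _ => 0
  | .app _ ts => Finset.univ.sup (fun i => (ts i).height + 1)

/-- The size of a term. -/
def Term.size : Term F ar V → ℕ
  | .var _ => 1
  | .app _ ts => 1 + ∑ i, (ts i).size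

/-- The subterm of a term at a position (a list of child indices), if it exists. -/
def Term.sub : Term F ar V → List ℕ → Option (Term F ar V)
  | t, [] => some t
  | .var _, _ :: _ => none
  | .app f ts, i :: p => if h : i < ar f then (ts ⟨i, h⟩).sub p else none

/-- The root symbol of a term: a function symbol or a variable. -/
def Term.rootSym : Term F ar V → F ⊕ V
  | .var x => .inr x
  | .app f _ => .inl f

/-- `p` is a position of `t`. -/
def Term.isPos (t : Term F ar V) (p : List ℕ) : Prop := t.sub p ≠ none

/-- `p` is a variable position of `t`. -/
def Term.isVarPos (t : Term F ar V) (p : List ℕ) : Prop :=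
  ∃ x, t.sub p = some (Term.var x)

/-- `p` is a non-variable position of `t`. -/
def Term.isNonVarPos (t : Term F ar V) (p : List ℕ) : Prop :=
  ∃ f ts, t.sub p = some (Term.app f ts)

/-- The variable `x` occurs in `t`. -/
def Term.varOccurs (t : Term F ar V) (x : V) : Prop :=
  ∃ p, t.sub p = some (Term.var x)

/-- The variable `x` occurs at least twice in `t`. -/
def Term.occursTwice (t : Term F ar V) (x : V) : Prop :=
  ∃ p q, p ≠ q ∧ t.sub p = some (Term.var x) ∧ t.sub q = some (Term.var x)

/-- `t` is determined at position `p`: either `p` is a non-variable position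
of `t`, or some prefix of `p` is labeled by a constant symbol. -/
def Term.determinedAt (t : Term F ar V) (p : List ℕ) : Prop :=
  t.isNonVarPos p ∨ ∃ p', p' <+: p ∧ ∃ f ts, t.sub p' = some (Term.app f ts) ∧ ar f = 0

/-- A deterministic tree automaton: at most one transition `f(q₁,…,qₖ) → q`
for every `f` and states `q₁,…,qₖ`. -/
structure DTA (F : Type) (ar : F → ℕ) (Q : Type) : Type where
  δ : (f : F) → (Fin (ar f) → Q) → Option Q

/-- Collect a family of optional values into an optional family. -/
def allSome {n : ℕ} {α : Type} (g : Fin n → Option α) : Option (Fin n → α) :=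
  if h : ∀ i, (g i).isSome then some (fun i => (g i).get (h i)) else none

/-- The state reached by `A` on a term, where variables are pre-assigned states by `C`. -/
def DTA.runC (A : DTA F ar Q) (C : V → Q) : Term F ar V → Option Q
  | .var x => some (C x)
  | .app f ts => (allSome (fun i => A.runC C (ts i))).bind (A.δ f)

/-- The state reached by `A` on a ground term. -/
def DTA.run (A : DTA F ar Q) : GTerm F ar → Option Q :=
  A.runC (fun x => x.elim)

/-- `L(A,q)`: the set of ground terms on which `A` reaches state `q`. -/
def DTA.lang (A : DTA F ar Q) (q : Q) : Set (GTerm F ar) :=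
  {t | A.run t = some q}

/-- `A` is complete. -/
def DTA.Complete (A : DTA F ar Q) : Prop :=
  ∀ (f : F) (qs : Fin (ar f) → Q), (A.δ f qs).isSome

/-- `A` is a 1-or-n DTA: each state has exactly one, or at least `n`, terms. -/
def DTA.OneOr (A : DTA F ar Q) (n : ℕ) : Prop :=
  ∀ q : Q, (A.lang q).encard = 1 ∨ (n : ℕ∞) ≤ (A.lang q).encard

/-- The number of transitions of a DTA. -/
noncomputable def DTA.numTrans [Fintype F] [Fintype Q] (A : DTA F ar Q) : ℕ :=
  ∑ f : F, ∑ qs : Fin (ar f) → Q, if (A.δ f qs).isSome then 1 else 0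

/-- A set of ground terms is regular if it is recognized by some (finite) DTA. -/
def IsRegular (L : Set (GTerm F ar)) : Prop :=
  ∃ (Q : Type) (_ : Fintype Q) (A : DTA F ar Q) (Facc : Set Q),
    L = {t | ∃ q ∈ Facc, A.run t = some q}

/-- A DTA bundled with its (finite) state type and accepting states. -/
structure NDTA (F : Type) (ar : F → ℕ) : Type 1 where
  Q : Type
  fin : Fintype Q
  A : DTA F ar Q
  acc : Set Q

/-- The language recognized by a bundled DTA. -/
def NDTA.lang (N : NDTA F ar) : Set (GTerm F ar) :=
  {t | ∃ q ∈ N.acc, N.A.run t = some q}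

/-- The size of a bundled DTA: number of states plus sum of sizes of transitions. -/
noncomputable def NDTA.size [Fintype F] (N : NDTA F ar) : ℕ :=
  letI := N.fin
  Fintype.card N.Q +
    ∑ f : F, ∑ qs : Fin (ar f) → N.Q, if (N.A.δ f qs).isSome then ar f + 2 else 0

/-- `L(⟨S,M⟩)`: the language of a set of terms `S` with regular constraints `M`. -/
def langM (S : Set (Term F ar V)) (M : V → NDTA F ar) : Set (GTerm F ar) :=
  {t | ∃ s ∈ S, ∃ φ : V → GTerm F ar, (∀ x, φ x ∈ (M x).lang) ∧ t = s.subst φ}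

/-- `L(⟨S,R⟩)` for a single regular constraint `R = ⟨A,C⟩`. -/
def langSingle (S : Set (Term F ar V)) (A : DTA F ar Q) (C : V → Q) :
    Set (GTerm F ar) :=
  {t | ∃ s ∈ S, ∃ φ : V → GTerm F ar, (∀ x, A.run (φ x) = some (C x)) ∧ t = s.subst φ}

/-- A restricted regular constraint `R = ⟨A,V,C,W,h⟩`. -/
structure RRC (F : Type) (ar : F → ℕ) (V Q : Type) : Type where
  A : DTA F ar Q
  C : V → Q
  W : Set V
  hgt : ℕ

/-- A solution of a restricted regular constraint. -/
def RRC.IsSolution (R : RRC F ar V Q) (φ : V → GTerm F ar) : Prop :=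
  (∀ x, R.A.run (φ x) = some (R.C x)) ∧ ∀ x ∈ R.W, (φ x).height ≤ R.hgt

/-- `L(⟨S,R⟩)` for a restricted regular constraint `R`. -/
def RRC.lang (R : RRC F ar V Q) (S : Set (Term F ar V)) : Set (GTerm F ar) :=
  {t | ∃ s ∈ S, ∃ φ, R.IsSolution φ ∧ t = s.subst φ}

/-- Renaming the variables of a term. -/
def Term.rename (ρ : V → V') (t : Term F ar V) : Term F ar V' :=
  t.subst (fun x => Term.var (ρ x))

/-- `s` and `t` are structurally similar: `t` is obtained from `s` by an
injective variable renaming. -/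
def StructSim (s : Term F ar V) (t : Term F ar V') : Prop :=
  ∃ ρ : V → V', Function.Injective ρ ∧ t = s.rename ρ

/-- `s` and `t` are structurally equal with respect to the state assignment `C`. -/
def StructEq (C : V → Q) (s t : Term F ar V) : Prop :=
  StructSim s t ∧
    ∀ p x y, s.sub p = some (Term.var x) → t.sub p = some (Term.var y) → C x = C y

/-- `s` is structurally subsumed by `t` (with respect to `A` and `C`). -/
def StructSub (A : DTA F ar Q) (C : V → Q) (s t : Term F ar V) : Prop :=
  (∀ p f ts, t.sub p = some (Term.app f ts) →
    ∃ sp, s.sub p = some sp ∧ sp.rootSym = Sum.inl f) ∧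
  (∀ p tp, t.sub p = some tp → ∃ sp, s.sub p = some sp ∧ A.runC C tp = A.runC C sp)

/-- Building a binary term `f(t,u)` from a symbol of arity 2. -/
def mkBin {f : F} (h : ar f = 2) (t u : Term F ar V) : Term F ar V :=
  Term.app f (fun i => if (i : ℕ) = 0 then t else u)

/-- `s` satisfies the infinite-instances property in `⟨S,R⟩`. -/
def InfiniteInstances (R : RRC F ar V Q) (S : Set (Term F ar V)) (s : Term F ar V) :
    Prop :=
  ∃ x, s.occursTwice x ∧
    ∃ φ : ℕ → (V → GTerm F ar),
      (∀ i, R.IsSolution (φ i)) ∧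
      (∀ i, s.subst (φ i) ∉ R.lang (S \ {s})) ∧
      (∀ i j, i ≠ j → φ i x ≠ φ j x)

/-- The set of prefixes of a finite set of positions. -/
def prefixes (P : Finset (List ℕ)) : Finset (List ℕ) :=
  P.biUnion (fun p => p.inits.toFinset)


/-- Predicates of formulas: inequalities `s ≠ t` and height predicates `height s > h`. -/
inductive Pred (F : Type) (ar : F → ℕ) (V : Type) : Type where
  | neq : Term F ar V → Term F ar V → Pred F ar V
  | hgt : Term F ar V → ℕ → Pred F ar V

/-- A conjunction of predicates. -/
abbrev Conj (F : Type) (ar : F → ℕ) (V : Type) : Type := List (Pred F ar V)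

/-- A formula with inequality and height predicates:
a disjunction of conjunctions of predicates. -/
abbrev Formula (F : Type) (ar : F → ℕ) (V : Type) : Type := List (Conj F ar V)

/-- Truth of a predicate under a substitution. -/
def Pred.holds (φ : V → GTerm F ar) : Pred F ar V → Prop
  | .neq s t => s.subst φ ≠ t.subst φ
  | .hgt s h => h < (s.subst φ).height

/-- Truth of a conjunction under a substitution. -/
def Conj.holds (φ : V → GTerm F ar) (c : Conj F ar V) : Prop :=
  ∀ p ∈ c, p.holds φ

/-- Truth of a formula under a substitution. -/
def Formula.holds (φ : V → GTerm F ar) (Fm : Formula F ar V) : Prop :=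
  ∃ c ∈ Fm, Conj.holds φ c

/-- The set of solutions of a constrained formula `⟨F,A,C⟩`. -/
def SolF (A : DTA F ar Q) (C : V → Q) (Fm : Formula F ar V) :
    Set (V → GTerm F ar) :=
  {φ | (∀ x, A.run (φ x) = some (C x)) ∧ Fm.holds φ}

/-- `⟨F,A,C⟩` is a constrained formula of order `n`: `A` is a 1-or-(n+1) DTA,
every conjunction has at most `n` predicates, and every height predicate
`height s > h` satisfies `h ≥ |Q| + height s`. -/
def IsOrder [Fintype Q] (A : DTA F ar Q) (C : V → Q) (n : ℕ)
    (Fm : Formula F ar V) : Prop :=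
  A.OneOr (n + 1) ∧
  (∀ c ∈ Fm, c.length ≤ n) ∧
  (∀ c ∈ Fm, ∀ s h, Pred.hgt s h ∈ c → Fintype.card Q + Term.height s ≤ h)

/-- One step of the inference system transforming constrained formulas. -/
inductive Derives [Fintype Q] (A : DTA F ar Q) (C : V → Q) :
    Formula F ar V → Formula F ar V → Prop where
  /-- Remove-insat1: delete a conjunction containing `t ≠ t`. -/
  | removeInsat1 (F₁ F₂ : Formula F ar V) (c₁ c₂ : Conj F ar V) (t : Term F ar V) :
      Derives A C (F₁ ++ (c₁ ++ Pred.neq t t :: c₂) :: F₂) (F₁ ++ F₂)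
  /-- Remove-insat2: delete a conjunction containing `s^q ≠ t^q` with `|L(A,q)| = 1`. -/
  | removeInsat2 (F₁ F₂ : Formula F ar V) (c₁ c₂ : Conj F ar V) (s t : Term F ar V)
      (q : Q) (hs : A.runC C s = some q) (ht : A.runC C t = some q)
      (hq : (A.lang q).encard = 1) :
      Derives A C (F₁ ++ (c₁ ++ Pred.neq s t :: c₂) :: F₂) (F₁ ++ F₂)
  /-- Remove-sat1: remove a predicate `s^q ≠ t^{q'}` with `q ≠ q'`, or with
  distinct non-variable root symbols. -/
  | removeSat1 (F₁ F₂ : Formula F ar V) (c₁ c₂ : Conj F ar V) (s t : Term F ar V)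
      (h : (∃ q q', A.runC C s = some q ∧ A.runC C t = some q' ∧ q ≠ q') ∨
           (∃ f g, s.rootSym = Sum.inl f ∧ t.rootSym = Sum.inl g ∧ f ≠ g)) :
      Derives A C (F₁ ++ (c₁ ++ Pred.neq s t :: c₂) :: F₂) (F₁ ++ (c₁ ++ c₂) :: F₂)
  /-- Remove-sat2: remove a predicate `x^q ≠ t^q` where `t ≠ x` and `x` occurs in `t`. -/
  | removeSat2 (F₁ F₂ : Formula F ar V) (c₁ c₂ : Conj F ar V) (s t : Term F ar V)
      (q : Q) (hs : A.runC C s = some q) (ht : A.runC C t = some q)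
      (h : (∃ x, s = Term.var x ∧ t ≠ Term.var x ∧ t.varOccurs x) ∨
           (∃ x, t = Term.var x ∧ s ≠ Term.var x ∧ s.varOccurs x)) :
      Derives A C (F₁ ++ (c₁ ++ Pred.neq s t :: c₂) :: F₂) (F₁ ++ (c₁ ++ c₂) :: F₂)
  /-- Decompose: replace `f^q(s₁,…,sₘ) ≠ f^q(t₁,…,tₘ)` by the disjunction over `i`
  of the conjunctions with the predicate replaced by `sᵢ ≠ tᵢ`. -/
  | decompose (F₁ F₂ : Formula F ar V) (c₁ c₂ : Conj F ar V) (f : F)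
      (ss ts : Fin (ar f) → Term F ar V) (q : Q)
      (hs : A.runC C (Term.app f ss) = some q) (ht : A.runC C (Term.app f ts) = some q) :
      Derives A C (F₁ ++ (c₁ ++ Pred.neq (Term.app f ss) (Term.app f ts) :: c₂) :: F₂)
        (F₁ ++ (List.ofFn fun i => c₁ ++ Pred.neq (ss i) (ts i) :: c₂) ++ F₂)
  /-- Decrease-height: replace `height(f^q(s₁,…,sₘ)) > h`, for `L(A,q)` infinite and
  `h > |Q|`, by the disjunction over `i` of the conjunctions with the predicate
  replaced by `height sᵢ > h-1`. -/
  | decreaseHeight (F₁ F₂ : Formula F ar V) (c₁ c₂ : Conj F ar V) (f : F)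
      (ss : Fin (ar f) → Term F ar V) (h : ℕ) (q : Q)
      (hq : A.runC C (Term.app f ss) = some q) (hinf : (A.lang q).Infinite)
      (hh : Fintype.card Q < h) :
      Derives A C (F₁ ++ (c₁ ++ Pred.hgt (Term.app f ss) h :: c₂) :: F₂)
        (F₁ ++ (List.ofFn fun i => c₁ ++ Pred.hgt (ss i) (h - 1) :: c₂) ++ F₂)
  /-- Remove-height: delete a conjunction containing `height(s^q) > h` with
  `L(A,q)` finite and `h ≥ |Q|`. -/
  | removeHeight (F₁ F₂ : Formula F ar V) (c₁ c₂ : Conj F ar V) (s : Term F ar V)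
      (h : ℕ) (q : Q) (hq : A.runC C s = some q) (hfin : (A.lang q).Finite)
      (hh : Fintype.card Q ≤ h) :
      Derives A C (F₁ ++ (c₁ ++ Pred.hgt s h :: c₂) :: F₂) (F₁ ++ F₂)

/-- A constrained formula is final if no inference rule applies to it. -/
def IsFinal [Fintype Q] (A : DTA F ar Q) (C : V → Q) (Fm : Formula F ar V) : Prop :=
  ¬ ∃ G, Derives A C Fm G


section Helpers

variable {F V V' Q : Type} {ar : F → ℕ}

lemma allSome_eq_some {n : ℕ} {α : Type} {g : Fin n → Option α} {v : Fin n → α}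
    (h : allSome g = some v) : ∀ i, g i = some (v i) := by
  intro i
  unfold allSome at h
  split at h
  · rename_i hh
    cases h
    exact Option.eq_some_iff_get_eq.mpr ⟨hh i, rfl⟩
  · cases h

lemma allSome_isSome {n : ℕ} {α : Type} {g : Fin n → Option α}
    (h : (allSome g).isSome) : ∀ i, (g i).isSome := by
  unfold allSome at h
  split at h
  · assumption
  · simp at h

lemma runC_subst (A : DTA F ar Q) {C : V → Q} {φ : V → GTerm F ar}
    (hφ : ∀ x, A.run (φ x) = some (C x)) (s : Term F ar V) :
    A.run (s.subst φ) = A.runC C s := by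
  induction s with
  | var x => simpa [Term.subst, DTA.runC] using hφ x
  | app f ts ih =>
    show A.runC _ _ = _
    simp only [Term.subst, DTA.runC]
    congr 1
    congr 1
    funext i
    exact ih i

lemma formula_holds_middle (F₁ F₂ : Formula F ar V) (c : Conj F ar V)
    (φ : V → GTerm F ar) :
    (F₁ ++ c :: F₂).holds φ ↔ F₁.holds φ ∨ Conj.holds φ c ∨ F₂.holds φ := by
  simp only [Formula.holds, List.mem_append, List.mem_cons]
  constructor
  · rintro ⟨d, (h | rfl | h), hd⟩
    · exact Or.inl ⟨d, h, hd⟩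
    · exact Or.inr (Or.inl hd)
    · exact Or.inr (Or.inr ⟨d, h, hd⟩)
  · rintro (⟨d, h, hd⟩ | h | ⟨d, h, hd⟩)
    · exact ⟨d, Or.inl h, hd⟩
    · exact ⟨c, Or.inr (Or.inl rfl), h⟩
    · exact ⟨d, Or.inr (Or.inr h), hd⟩

lemma formula_holds_append (F₁ F₂ : Formula F ar V) (φ : V → GTerm F ar) :
    (F₁ ++ F₂).holds φ ↔ F₁.holds φ ∨ F₂.holds φ := by
  simp only [Formula.holds, List.mem_append]
  constructor
  · rintro ⟨d, (h | h), hd⟩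
    · exact Or.inl ⟨d, h, hd⟩
    · exact Or.inr ⟨d, h, hd⟩
  · rintro (⟨d, h, hd⟩ | ⟨d, h, hd⟩)
    · exact ⟨d, Or.inl h, hd⟩
    · exact ⟨d, Or.inr h, hd⟩

lemma conj_holds_middle (c₁ c₂ : Conj F ar V) (p : Pred F ar V)
    (φ : V → GTerm F ar) :
    Conj.holds φ (c₁ ++ p :: c₂) ↔ Conj.holds φ c₁ ∧ p.holds φ ∧ Conj.holds φ c₂ := by
  simp only [Conj.holds, List.mem_append, List.mem_cons]
  constructor
  · intro h
    exact ⟨fun r hr => h r (Or.inl hr), h p (Or.inr (Or.inl rfl)),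
      fun r hr => h r (Or.inr (Or.inr hr))⟩
  · rintro ⟨h1, h2, h3⟩ r (hr | rfl | hr)
    · exact h1 r hr
    · exact h2
    · exact h3 r hr

lemma conj_holds_append (c₁ c₂ : Conj F ar V) (φ : V → GTerm F ar) :
    Conj.holds φ (c₁ ++ c₂) ↔ Conj.holds φ c₁ ∧ Conj.holds φ c₂ := by
  simp only [Conj.holds, List.mem_append]
  constructor
  · intro h
    exact ⟨fun r hr => h r (Or.inl hr), fun r hr => h r (Or.inr hr)⟩
  · rintro ⟨h1, h2⟩ r (hr | hr)
    · exact h1 r hr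
    · exact h2 r hr

lemma size_sub {t u : Term F ar V} {p : List ℕ} (h : t.sub p = some u) :
    u.size + p.length ≤ t.size := by
  induction p generalizing t with
  | nil => simp only [Term.sub] at h; cases h; simp
  | cons i p ih =>
    cases t with
    | var x => simp [Term.sub] at h
    | app f ts =>
      simp only [Term.sub] at h
      split at h
      · rename_i hi
        have := ih h
        have h2 : (ts ⟨i, hi⟩).size ≤ ∑ j, (ts j).size :=
          Finset.single_le_sum (f := fun j => (ts j).size)
            (fun j _ => Nat.zero_le _) (Finset.mem_univ _)
        simp only [Term.size, List.length_cons]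
        omega
      · cases h

lemma size_subst_sub {t : Term F ar V} {x : V} {p : List ℕ}
    (h : t.sub p = some (Term.var x)) (φ : V → GTerm F ar) :
    ∃ u, (t.subst φ).sub p = some u ∧ u = φ x := by
  induction p generalizing t with
  | nil =>
    simp only [Term.sub, Option.some.injEq] at h
    subst h
    exact ⟨φ x, by simp [Term.subst, Term.sub], rfl⟩
  | cons i p ih =>
    cases t with
    | var y => simp [Term.sub] at h
    | app f ts =>
      simp only [Term.sub] at h
      split at h
      · rename_i hi
        obtain ⟨u, hu, rfl⟩ := ih h
        refine ⟨φ x, ?_, rfl⟩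
        simpa [Term.subst, Term.sub, hi] using hu
      · cases h

lemma neq_of_varOccurs {t : Term F ar V} {x : V}
    (hne : t ≠ Term.var x) (hocc : t.varOccurs x) (φ : V → GTerm F ar) :
    φ x ≠ t.subst φ := by
  obtain ⟨p, hp⟩ := hocc
  have hpne : p ≠ [] := by
    rintro rfl
    simp only [Term.sub] at hp
    cases hp
    exact hne rfl
  obtain ⟨u, hu, rfl⟩ := size_subst_sub hp φ
  have := size_sub hu
  intro heq
  rw [heq] at this
  cases p with
  | nil => exact hpne rfl
  | cons a q => simp only [List.length_cons] at this; omega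

end Helpers

section Pump

variable {F V Q : Type} {ar : F → ℕ}

/-- Replace the subterm at position `p` by `u`. -/
def Term.replace : Term F ar V → List ℕ → Term F ar V → Term F ar V
  | _, [], u => u
  | .var x, _ :: _, _ => .var x
  | .app f ts, i :: p, u =>
    if h : i < ar f then
      .app f (Function.update ts ⟨i, h⟩ ((ts ⟨i, h⟩).replace p u))
    else .app f ts

lemma sub_append (t : Term F ar V) (p q : List ℕ) :
    t.sub (p ++ q) = (t.sub p).bind (fun s => s.sub q) := by
  induction p generalizing t with
  | nil => simp [Term.sub]
  | cons i p ih =>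
    cases t with
    | var x => simp [Term.sub]
    | app f ts =>
      simp only [List.cons_append, Term.sub]
      split
      · exact ih _
      · simp

lemma runC_sub_isSome (A : DTA F ar Q) (C : V → Q) {t s : Term F ar V} {p : List ℕ}
    (hr : (A.runC C t).isSome) (hp : t.sub p = some s) :
    (A.runC C s).isSome := by
  induction p generalizing t with
  | nil => simp only [Term.sub, Option.some.injEq] at hp; subst hp; exact hr
  | cons i p ih =>
    cases t with
    | var x => simp [Term.sub] at hp
    | app f ts =>
      simp only [Term.sub] at hp
      split at hp
      · rename_i hi
        apply ih _ hp
        simp only [DTA.runC] at hr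
        have h1 : (allSome fun j => A.runC C (ts j)).isSome := by
          cases hall : allSome fun j => A.runC C (ts j) with
          | none => rw [hall] at hr; simp at hr
          | some v => simp
        exact allSome_isSome h1 ⟨i, hi⟩
      · cases hp

lemma runC_replace (A : DTA F ar Q) (C : V → Q) {t s u : Term F ar V} {p : List ℕ}
    (hp : t.sub p = some s) (hu : A.runC C u = A.runC C s) :
    A.runC C (t.replace p u) = A.runC C t := by
  induction p generalizing t with
  | nil =>
    simp only [Term.sub, Option.some.injEq] at hp; subst hp
    simpa [Term.replace] using hu
  | cons i p ih =>
    cases t with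
    | var x => simp [Term.sub] at hp
    | app f ts =>
      simp only [Term.sub] at hp
      split at hp
      · rename_i hi
        have := ih hp
        simp only [Term.replace, dif_pos hi, DTA.runC]
        congr 2
        funext j
        by_cases hj : j = ⟨i, hi⟩
        · subst hj; simp [Function.update, this]
        · simp [Function.update_of_ne hj]
      · cases hp

lemma height_replace {t s : Term F ar V} {p : List ℕ} (hp : t.sub p = some s)
    (u : Term F ar V) : p.length + u.height ≤ (t.replace p u).height := by
  induction p generalizing t with
  | nil => simp [Term.replace]
  | cons i p ih =>
    cases t with
    | var x => simp [Term.sub] at hp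
    | app f ts =>
      simp only [Term.sub] at hp
      split at hp
      · rename_i hi
        have := ih hp
        simp only [Term.replace, dif_pos hi, Term.height, List.length_cons]
        have h2 := Finset.le_sup
          (f := fun j => ((Function.update ts ⟨i, hi⟩ ((ts ⟨i, hi⟩).replace p u)) j).height + 1)
          (Finset.mem_univ ⟨i, hi⟩)
        simp only [Function.update_self] at h2
        omega
      · cases hp

lemma exists_deep_path (t : Term F ar V) :
    ∃ P : List ℕ, P.length = t.height ∧
      ∀ k ≤ t.height, ∃ s, t.sub (P.take k) = some s ∧ s.height = t.height - k := by
  induction t with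
  | var x =>
    refine ⟨[], rfl, ?_⟩
    intro k hk
    simp only [Term.height, Nat.le_zero] at hk
    subst hk
    exact ⟨Term.var x, rfl, rfl⟩
  | app f ts ih =>
    by_cases h0 : (Term.app f ts).height = 0
    · refine ⟨[], by simp [h0], ?_⟩
      intro k hk
      rw [h0, Nat.le_zero] at hk
      subst hk
      exact ⟨Term.app f ts, rfl, by omega⟩
    · have hne : (Finset.univ : Finset (Fin (ar f))).Nonempty := by
        by_contra hc
        rw [Finset.not_nonempty_iff_eq_empty] at hc
        apply h0
        show Finset.univ.sup _ = 0
        rw [hc]; simp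
      obtain ⟨i, _, hi⟩ := Finset.exists_mem_eq_sup Finset.univ hne
        (fun j => (ts j).height + 1)
      have hhe : (Term.app f ts).height = (ts i).height + 1 := hi
      obtain ⟨P, hPl, hP⟩ := ih i
      refine ⟨(i : ℕ) :: P, by simp [hhe, hPl], ?_⟩
      intro k hk
      cases k with
      | zero => exact ⟨Term.app f ts, rfl, by omega⟩
      | succ k =>
        have hk' : k ≤ (ts i).height := by omega
        obtain ⟨s, hs, hsh⟩ := hP k hk'
        refine ⟨s, ?_, by omega⟩
        simp only [List.take_succ_cons, Term.sub, Fin.is_lt, dif_pos, Fin.eta]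
        exact hs

lemma pump [Fintype Q] (A : DTA F ar Q) {t : GTerm F ar} {q : Q}
    (ht : A.run t = some q) (hh : Fintype.card Q ≤ t.height) :
    ∃ t', A.run t' = some q ∧ t.height < t'.height := by
  classical
  obtain ⟨P, hPl, hP⟩ := exists_deep_path t
  have hsub : ∀ k : Fin (t.height + 1), ∃ s, t.sub (P.take k) = some s ∧
      s.height = t.height - k ∧ (A.run s).isSome := by
    intro k
    obtain ⟨s, hs, hsh⟩ := hP k (by omega)
    refine ⟨s, hs, hsh, runC_sub_isSome A _ ?_ hs⟩
    show (A.run t).isSome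
    rw [ht]; rfl
  choose sub hsub1 hsub2 hsub3 using hsub
  let g : Fin (t.height + 1) → Q := fun k => (A.run (sub k)).get (hsub3 k)
  have hg : ∀ k, A.run (sub k) = some (g k) := fun k => by
    simp [g, Option.eq_some_iff_get_eq]
  have hcard : Fintype.card Q < Fintype.card (Fin (t.height + 1)) := by
    simp; omega
  obtain ⟨a, b, hlt, hgab⟩ : ∃ a b : Fin (t.height + 1), a < b ∧ g a = g b := by
    obtain ⟨a, b, hab, hgab⟩ := Fintype.exists_ne_map_eq_of_card_lt g hcard
    rcases lt_or_gt_of_ne hab with h | h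
    · exact ⟨a, b, h, hgab⟩
    · exact ⟨b, a, h, hgab.symm⟩
  have haj : (a : ℕ) ≤ t.height := by omega
  have hbk : (b : ℕ) ≤ t.height := by omega
  have habn : (a : ℕ) < (b : ℕ) := hlt
  -- relative path from position of `sub a` to position of `sub b`
  set pp : List ℕ := (P.take (b : ℕ)).drop (a : ℕ) with hpp
  have htake : P.take (a : ℕ) = (P.take (b : ℕ)).take (a : ℕ) := by
    rw [List.take_take]
    congr 1
    omega
  have hsplit : P.take (a : ℕ) ++ pp = P.take (b : ℕ) := by
    rw [htake, hpp, List.take_append_drop]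
  have hppl : pp.length = (b : ℕ) - (a : ℕ) := by
    simp [hpp, List.length_drop, List.length_take, hPl]
    omega
  have hsubab : (sub a).sub pp = some (sub b) := by
    have := hsub1 b
    rw [← hsplit, sub_append, hsub1 a] at this
    simpa using this
  have hrun_eq : A.runC (fun x : Empty => x.elim) (sub a)
      = A.runC (fun x : Empty => x.elim) (sub b) := by
    show A.run (sub a) = A.run (sub b)
    rw [hg a, hg b, hgab]
  -- the pumped inner term
  set inner : GTerm F ar := (sub a).replace pp (sub a) with hinner
  have hrun_inner : A.runC (fun x : Empty => x.elim) inner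
      = A.runC (fun x : Empty => x.elim) (sub a) := by
    exact runC_replace A _ hsubab (by rw [hrun_eq])
  have hh_inner : pp.length + (sub a).height ≤ inner.height := height_replace hsubab _
  refine ⟨t.replace (P.take (a : ℕ)) inner, ?_, ?_⟩
  · show A.runC _ _ = some q
    rw [runC_replace A _ (hsub1 a) hrun_inner]
    exact ht
  · have h1 := height_replace (hsub1 a) inner
    have h2 : (P.take (a : ℕ)).length = (a : ℕ) := by
      simp [List.length_take, hPl]; omega
    have h3 := hsub2 a
    omega

lemma height_lt_card [Fintype Q] (A : DTA F ar Q) {q : Q}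
    (hfin : (A.lang q).Finite) {t : GTerm F ar} (ht : A.run t = some q) :
    t.height < Fintype.card Q := by
  by_contra hcon
  push_neg at hcon
  have grow : ∀ m, ∃ t', A.run t' = some q ∧ t.height + m ≤ t'.height := by
    intro m
    induction m with
    | zero => exact ⟨t, ht, le_rfl⟩
    | succ m ih =>
      obtain ⟨t', ht', hle⟩ := ih
      obtain ⟨t'', h1, h2⟩ := pump A ht' (by omega)
      exact ⟨t'', h1, by omega⟩
  obtain ⟨B, hB⟩ := (hfin.image Term.height).bddAbove
  obtain ⟨t', ht', hle⟩ := grow (B + 1)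
  have : t'.height ≤ B := hB ⟨t', ht', rfl⟩
  omega

end Pump

section Main

variable {F V Q : Type} {ar : F → ℕ}

lemma mem_lift {F₁ F₂ : Formula F ar V} {X c : Conj F ar V}
    (hc : c ∈ F₁ ++ F₂) : c ∈ F₁ ++ X :: F₂ := by
  simp only [List.mem_append, List.mem_cons] at *
  tauto

lemma mem_self (F₁ F₂ : Formula F ar V) (X : Conj F ar V) :
    X ∈ F₁ ++ X :: F₂ := by simp

lemma formula_holds_ofFn_middle (F₁ F₂ : Formula F ar V) {m : ℕ}
    (g : Fin m → Conj F ar V) (φ : V → GTerm F ar) :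
    (F₁ ++ List.ofFn g ++ F₂).holds φ ↔
      F₁.holds φ ∨ (∃ i, Conj.holds φ (g i)) ∨ F₂.holds φ := by
  simp only [Formula.holds, List.mem_append, List.mem_ofFn]
  constructor
  · rintro ⟨c, ((h | ⟨i, rfl⟩) | h), hc⟩
    · exact Or.inl ⟨c, h, hc⟩
    · exact Or.inr (Or.inl ⟨i, hc⟩)
    · exact Or.inr (Or.inr ⟨c, h, hc⟩)
  · rintro (⟨c, h, hc⟩ | ⟨i, hc⟩ | ⟨c, h, hc⟩)
    · exact ⟨c, Or.inl (Or.inl h), hc⟩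
    · exact ⟨g i, Or.inl (Or.inr ⟨i, rfl⟩), hc⟩
    · exact ⟨c, Or.inr h, hc⟩

lemma run_subst' (A : DTA F ar Q) {C : V → Q} {φ : V → GTerm F ar}
    (hφ : ∀ x, A.run (φ x) = some (C x)) {s : Term F ar V} {q : Q}
    (hs : A.runC C s = some q) : A.run (s.subst φ) = some q :=
  (runC_subst A hφ s).trans hs

lemma height_app_le {f : F} (ss : Fin (ar f) → Term F ar V) (i : Fin (ar f)) :
    (ss i).height + 1 ≤ (Term.app f ss).height :=
  Finset.le_sup (f := fun j => (ss j).height + 1) (Finset.mem_univ i)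

theorem derives_preserves_order_and_solutions' {F V Q : Type} {ar : F → ℕ}
    [Fintype Q]
    (A : DTA F ar Q) (C : V → Q) (n : ℕ) (Fm G : Formula F ar V)
    (hF : IsOrder A C n Fm) (hd : Derives A C Fm G) :
    IsOrder A C n G ∧ SolF A C G = SolF A C Fm := by
  classical
  obtain ⟨hA, hlen, hhgt⟩ := hF
  cases hd with
  | removeInsat1 F₁ F₂ c₁ c₂ t =>
    refine ⟨⟨hA, fun c hc => hlen c (mem_lift hc), fun c hc => hhgt c (mem_lift hc)⟩, ?_⟩
    ext φ
    simp only [SolF, Set.mem_setOf_eq]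
    apply and_congr_right
    intro hφ
    rw [formula_holds_append, formula_holds_middle]
    constructor
    · tauto
    · rintro (h | h | h)
      · exact Or.inl h
      · exfalso
        rw [conj_holds_middle] at h
        exact h.2.1 rfl
      · exact Or.inr h
  | removeInsat2 F₁ F₂ c₁ c₂ s t q hs ht hq =>
    refine ⟨⟨hA, fun c hc => hlen c (mem_lift hc), fun c hc => hhgt c (mem_lift hc)⟩, ?_⟩
    ext φ
    simp only [SolF, Set.mem_setOf_eq]
    apply and_congr_right
    intro hφ
    rw [formula_holds_append, formula_holds_middle]
    constructor
    · tauto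
    · rintro (h | h | h)
      · exact Or.inl h
      · exfalso
        rw [conj_holds_middle] at h
        obtain ⟨a, ha⟩ := Set.encard_eq_one.mp hq
        have h1 : s.subst φ ∈ A.lang q := run_subst' A hφ hs
        have h2 : t.subst φ ∈ A.lang q := run_subst' A hφ ht
        rw [ha, Set.mem_singleton_iff] at h1 h2
        exact h.2.1 (h1.trans h2.symm)
      · exact Or.inr h
  | removeSat1 F₁ F₂ c₁ c₂ s t h =>
    constructor
    · refine ⟨hA, ?_, ?_⟩
      · intro c hc
        rcases (by simpa using hc : c ∈ F₁ ∨ c = c₁ ++ c₂ ∨ c ∈ F₂) with h' | rfl | h'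
        · exact hlen c (mem_lift (by simp [h']))
        · have := hlen _ (mem_self F₁ F₂ (c₁ ++ Pred.neq s t :: c₂))
          simp only [List.length_append, List.length_cons] at this ⊢
          omega
        · exact hlen c (mem_lift (by simp [h']))
      · intro c hc s' h' hm
        rcases (by simpa using hc : c ∈ F₁ ∨ c = c₁ ++ c₂ ∨ c ∈ F₂) with h'' | rfl | h''
        · exact hhgt c (mem_lift (by simp [h''])) s' h' hm
        · refine hhgt _ (mem_self F₁ F₂ (c₁ ++ Pred.neq s t :: c₂)) s' h' ?_
          simp only [List.mem_append, List.mem_cons] at hm ⊢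
          tauto
        · exact hhgt c (mem_lift (by simp [h''])) s' h' hm
    · ext φ
      simp only [SolF, Set.mem_setOf_eq]
      apply and_congr_right
      intro hφ
      have hpred : (Pred.neq s t).holds φ := by
        show s.subst φ ≠ t.subst φ
        rcases h with ⟨q, q', hs, ht, hne⟩ | ⟨f, g, hsf, htg, hfg⟩
        · intro heq
          have h1 := run_subst' A hφ hs
          have h2 := run_subst' A hφ ht
          rw [heq, h2] at h1
          exact hne (Option.some.inj h1).symm
        · cases s with
          | var x => simp [Term.rootSym] at hsf
          | app f' ss =>
            cases t with
            | var y => simp [Term.rootSym] at htg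
            | app g' ts =>
              simp only [Term.rootSym, Sum.inl.injEq] at hsf htg
              subst hsf htg
              intro heq
              simp only [Term.subst] at heq
              injection heq with h1 _
              exact hfg h1
      rw [formula_holds_middle, formula_holds_middle, conj_holds_middle,
        conj_holds_append]
      tauto
  | removeSat2 F₁ F₂ c₁ c₂ s t q hs ht h =>
    constructor
    · refine ⟨hA, ?_, ?_⟩
      · intro c hc
        rcases (by simpa using hc : c ∈ F₁ ∨ c = c₁ ++ c₂ ∨ c ∈ F₂) with h' | rfl | h'
        · exact hlen c (mem_lift (by simp [h']))
        · have := hlen _ (mem_self F₁ F₂ (c₁ ++ Pred.neq s t :: c₂))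
          simp only [List.length_append, List.length_cons] at this ⊢
          omega
        · exact hlen c (mem_lift (by simp [h']))
      · intro c hc s' h' hm
        rcases (by simpa using hc : c ∈ F₁ ∨ c = c₁ ++ c₂ ∨ c ∈ F₂) with h'' | rfl | h''
        · exact hhgt c (mem_lift (by simp [h''])) s' h' hm
        · refine hhgt _ (mem_self F₁ F₂ (c₁ ++ Pred.neq s t :: c₂)) s' h' ?_
          simp only [List.mem_append, List.mem_cons] at hm ⊢
          tauto
        · exact hhgt c (mem_lift (by simp [h''])) s' h' hm
    · ext φ
      simp only [SolF, Set.mem_setOf_eq]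
      apply and_congr_right
      intro hφ
      have hpred : (Pred.neq s t).holds φ := by
        show s.subst φ ≠ t.subst φ
        rcases h with ⟨x, rfl, hne, hocc⟩ | ⟨x, rfl, hne, hocc⟩
        · exact neq_of_varOccurs hne hocc φ
        · exact (neq_of_varOccurs hne hocc φ).symm
      rw [formula_holds_middle, formula_holds_middle, conj_holds_middle,
        conj_holds_append]
      tauto
  | decompose F₁ F₂ c₁ c₂ f ss ts q hs ht =>
    constructor
    · refine ⟨hA, ?_, ?_⟩
      · intro c hc
        rcases (by simpa [List.mem_ofFn] using hc :
            c ∈ F₁ ∨ (∃ i, c₁ ++ Pred.neq (ss i) (ts i) :: c₂ = c) ∨ c ∈ F₂)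
          with h' | ⟨i, rfl⟩ | h'
        · exact hlen c (mem_lift (by simp [h']))
        · have := hlen _ (mem_self F₁ F₂
            (c₁ ++ Pred.neq (Term.app f ss) (Term.app f ts) :: c₂))
          simpa using this
        · exact hlen c (mem_lift (by simp [h']))
      · intro c hc s' h' hm
        rcases (by simpa [List.mem_ofFn] using hc :
            c ∈ F₁ ∨ (∃ i, c₁ ++ Pred.neq (ss i) (ts i) :: c₂ = c) ∨ c ∈ F₂)
          with h'' | ⟨i, rfl⟩ | h''
        · exact hhgt c (mem_lift (by simp [h''])) s' h' hm
        · refine hhgt _ (mem_self F₁ F₂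
            (c₁ ++ Pred.neq (Term.app f ss) (Term.app f ts) :: c₂)) s' h' ?_
          simp only [List.mem_append, List.mem_cons] at hm ⊢
          rcases hm with hm | hm | hm
          · tauto
          · cases hm
          · tauto
        · exact hhgt c (mem_lift (by simp [h''])) s' h' hm
    · ext φ
      simp only [SolF, Set.mem_setOf_eq]
      apply and_congr_right
      intro hφ
      rw [formula_holds_ofFn_middle, formula_holds_middle]
      have key : Conj.holds φ (c₁ ++ Pred.neq (Term.app f ss) (Term.app f ts) :: c₂) ↔
          ∃ i, Conj.holds φ (c₁ ++ Pred.neq (ss i) (ts i) :: c₂) := by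
        rw [conj_holds_middle]
        constructor
        · rintro ⟨h1, h2, h3⟩
          have hex : ∃ i, (ss i).subst φ ≠ (ts i).subst φ := by
            by_contra hc
            push_neg at hc
            apply h2
            show (Term.app f ss).subst φ = (Term.app f ts).subst φ
            simp only [Term.subst]
            congr 1
            funext i
            exact hc i
          obtain ⟨i, hi⟩ := hex
          exact ⟨i, (conj_holds_middle _ _ _ _).mpr ⟨h1, hi, h3⟩⟩
        · rintro ⟨i, hi⟩
          rw [conj_holds_middle] at hi
          refine ⟨hi.1, ?_, hi.2.2⟩
          show (Term.app f ss).subst φ ≠ (Term.app f ts).subst φ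
          intro heq
          apply hi.2.1
          show (ss i).subst φ = (ts i).subst φ
          simp only [Term.subst, Term.app.injEq, heq_eq_eq, true_and] at heq
          exact congrFun heq i
      rw [key]
  | decreaseHeight F₁ F₂ c₁ c₂ f ss h q hq hinf hh =>
    have horig := hhgt _ (mem_self F₁ F₂ (c₁ ++ Pred.hgt (Term.app f ss) h :: c₂))
      (Term.app f ss) h (by simp)
    constructor
    · refine ⟨hA, ?_, ?_⟩
      · intro c hc
        rcases (by simpa [List.mem_ofFn] using hc :
            c ∈ F₁ ∨ (∃ i, c₁ ++ Pred.hgt (ss i) (h - 1) :: c₂ = c) ∨ c ∈ F₂)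
          with h' | ⟨i, rfl⟩ | h'
        · exact hlen c (mem_lift (by simp [h']))
        · have := hlen _ (mem_self F₁ F₂ (c₁ ++ Pred.hgt (Term.app f ss) h :: c₂))
          simpa using this
        · exact hlen c (mem_lift (by simp [h']))
      · intro c hc s' h' hm
        rcases (by simpa [List.mem_ofFn] using hc :
            c ∈ F₁ ∨ (∃ i, c₁ ++ Pred.hgt (ss i) (h - 1) :: c₂ = c) ∨ c ∈ F₂)
          with h'' | ⟨i, rfl⟩ | h''
        · exact hhgt c (mem_lift (by simp [h''])) s' h' hm
        · simp only [List.mem_append, List.mem_cons] at hm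
          rcases hm with hm | hm | hm
          · exact hhgt _ (mem_self F₁ F₂ (c₁ ++ Pred.hgt (Term.app f ss) h :: c₂))
              s' h' (by simp [hm])
          · obtain ⟨h1, h2⟩ := Pred.hgt.inj hm
            subst h1 h2
            have := height_app_le ss i
            omega
          · exact hhgt _ (mem_self F₁ F₂ (c₁ ++ Pred.hgt (Term.app f ss) h :: c₂))
              s' h' (by simp [hm])
        · exact hhgt c (mem_lift (by simp [h''])) s' h' hm
    · ext φ
      simp only [SolF, Set.mem_setOf_eq]
      apply and_congr_right
      intro hφ
      rw [formula_holds_ofFn_middle, formula_holds_middle]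
      have key : Conj.holds φ (c₁ ++ Pred.hgt (Term.app f ss) h :: c₂) ↔
          ∃ i, Conj.holds φ (c₁ ++ Pred.hgt (ss i) (h - 1) :: c₂) := by
        rw [conj_holds_middle]
        have hiff : (Pred.hgt (Term.app f ss) h).holds φ ↔
            ∃ i, (Pred.hgt (ss i) (h - 1)).holds φ := by
          show h < ((Term.app f ss).subst φ).height ↔
            ∃ i, h - 1 < ((ss i).subst φ).height
          simp only [Term.subst, Term.height]
          rw [Finset.lt_sup_iff]
          constructor
          · rintro ⟨i, _, hi⟩
            exact ⟨i, by omega⟩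
          · rintro ⟨i, hi⟩
            exact ⟨i, Finset.mem_univ _, by omega⟩
        constructor
        · rintro ⟨h1, h2, h3⟩
          obtain ⟨i, hi⟩ := hiff.mp h2
          exact ⟨i, (conj_holds_middle _ _ _ _).mpr ⟨h1, hi, h3⟩⟩
        · rintro ⟨i, hi⟩
          rw [conj_holds_middle] at hi
          exact ⟨hi.1, hiff.mpr ⟨i, hi.2.1⟩, hi.2.2⟩
      rw [key]
  | removeHeight F₁ F₂ c₁ c₂ s h q hq hfin hh =>
    refine ⟨⟨hA, fun c hc => hlen c (mem_lift hc), fun c hc => hhgt c (mem_lift hc)⟩, ?_⟩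
    ext φ
    simp only [SolF, Set.mem_setOf_eq]
    apply and_congr_right
    intro hφ
    rw [formula_holds_append, formula_holds_middle]
    constructor
    · tauto
    · rintro (h' | h' | h')
      · exact Or.inl h'
      · exfalso
        rw [conj_holds_middle] at h'
        have hrun : A.run (s.subst φ) = some q := run_subst' A hφ hq
        have hlt := height_lt_card A hfin hrun
        have : h < (s.subst φ).height := h'.2.1
        omega
      · exact Or.inr h'

end Main

/-- if `⟨F,A,C⟩` is a constrained formula of order `n` and it
derives into `⟨G,A,C⟩` by one application of an inference rule, then `⟨G,A,C⟩`
is a constrained formula of order `n` with the same set of solutions. -/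
theorem derives_preserves_order_and_solutions {F V Q : Type} {ar : F → ℕ}
    [Fintype F] [Fintype Q] [Fintype V]
    (A : DTA F ar Q) (C : V → Q) (n : ℕ) (Fm G : Formula F ar V)
    (hF : IsOrder A C n Fm) (hd : Derives A C Fm G) :
    IsOrder A C n G ∧ SolF A C G = SolF A C Fm := by
  exact derives_preserves_order_and_solutions' A C n Fm G hF hd

end RITRC
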